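/- Let ȳ ∈ (0,∞], let m be a monotone measure on (X,𝒜), and let ⋆ : [0,ȳ]² → [0,ȳ] be nondecreasing and left-continuous with a ⋆ b ≤ min(a,b) for all a,b. Let φ : [0,ȳ] → [0,ȳ] be continuous and increasing with φ(0) = 0, and let φ⁻¹ denote the inverse of φ on its range [0,φ(ȳ)]. Then for every A ∈ 𝒜 and all f,g ∈ F^ȳ comonotone on A: φ⁻¹(I_{∧,A}(φ(f⋆g))) ≥ φ⁻¹(I_{∧,A}(φ(f))) ⋆ φ⁻¹(I_{∧,A}(φ(g))). (The integrals lie in [0,φ(ȳ)], so φ⁻¹ is applicable.) -/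

import Mathlib

open Set ENNReal

noncomputable def uSugeno {X : Type*} (ybar : ℝ≥0∞) (op : ℝ≥0∞ → ℝ≥0∞ → ℝ≥0∞)
    (m : Set X → ℝ≥0∞) (D : Set X) (f : X → ℝ≥0∞) : ℝ≥0∞ :=
  ⨆ t ∈ Set.Iic ybar, op t (m (D ∩ {x | t ≤ f x}))

noncomputable def qInt {X : Type*} (oti : ℝ≥0∞ → ℝ≥0∞ → ℝ≥0∞)
    (m : Set X → ℝ≥0∞) (f : X → ℝ≥0∞) : ℝ≥0∞ :=
  ⨆ t ∈ Set.Iic (1 : ℝ≥0∞), oti (m {x | t ≤ f x}) t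

def Mono2On (op : ℝ≥0∞ → ℝ≥0∞ → ℝ≥0∞) (s t : Set ℝ≥0∞) : Prop :=
  ∀ ⦃a₁⦄, a₁ ∈ s → ∀ ⦃b₁⦄, b₁ ∈ t → ∀ ⦃a₂⦄, a₂ ∈ s → ∀ ⦃b₂⦄, b₂ ∈ t →
    a₁ ≤ a₂ → b₁ ≤ b₂ → op a₁ b₁ ≤ op a₂ b₂

def LeftContOn (g : ℝ≥0∞ → ℝ≥0∞) (s : Set ℝ≥0∞) : Prop :=
  ∀ x ∈ s, ContinuousWithinAt g (Set.Iic x) x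

def RightContOn (g : ℝ≥0∞ → ℝ≥0∞) (s : Set ℝ≥0∞) : Prop :=
  ∀ x ∈ s, ContinuousWithinAt g (Set.Ici x) x

def LeftCont2On (op : ℝ≥0∞ → ℝ≥0∞ → ℝ≥0∞) (s t : Set ℝ≥0∞) : Prop :=
  (∀ b ∈ t, ∀ a ∈ s, ContinuousWithinAt (fun x => op x b) (Set.Iic a) a) ∧
  (∀ a ∈ s, ∀ b ∈ t, ContinuousWithinAt (fun y => op a y) (Set.Iic b) b)

def mRange {X : Type*} [MeasurableSpace X] (m : Set X → ℝ≥0∞) : Set ℝ≥0∞ :=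
  {c | ∃ A : Set X, MeasurableSet A ∧ m A = c}

def MonotoneMeasure {X : Type*} [MeasurableSpace X] (m : Set X → ℝ≥0∞) : Prop :=
  m ∅ = 0 ∧ 0 < m Set.univ ∧
    ∀ ⦃A B : Set X⦄, MeasurableSet A → MeasurableSet B → A ⊆ B → m A ≤ m B

def IsCapacity {X : Type*} [MeasurableSpace X] (m : Set X → ℝ≥0∞) : Prop :=
  m ∅ = 0 ∧ m Set.univ = 1 ∧
    ∀ ⦃A B : Set X⦄, MeasurableSet A → MeasurableSet B → A ⊆ B → m A ≤ m B

def ComonotoneOn {X : Type*} (D : Set X) (f g : X → ℝ≥0∞) : Prop :=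
  ∀ x ∈ D, ∀ y ∈ D, f x < f y → g x ≤ g y

def IsSemicopula (S : ℝ≥0∞ → ℝ≥0∞ → ℝ≥0∞) : Prop :=
  Mono2On S (Set.Iic 1) (Set.Iic 1) ∧
    ∀ a ∈ Set.Iic (1 : ℝ≥0∞), S a 1 = a ∧ S 1 a = a

def MPosDep {X : Type*} (m : Set X → ℝ≥0∞) (tri : ℝ≥0∞ → ℝ≥0∞ → ℝ≥0∞)
    (k : ℝ≥0∞) (A B : Set X) (f g : X → ℝ≥0∞) : Prop :=
  ∀ α ∈ Set.Iic k, ∀ β ∈ Set.Iic k,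
    tri (m (A ∩ {x | α ≤ f x})) (m (B ∩ {x | β ≤ g x})) ≤
      m (A ∩ B ∩ {x | α ≤ f x} ∩ {x | β ≤ g x})

open Filter Topology

/-- If `star p' q' ≤ M` for all `p' < p`, `q' < q`, then by left-continuity
`star p q ≤ M`. -/
lemma lim_lemma (ybar : ℝ≥0∞) (star : ℝ≥0∞ → ℝ≥0∞ → ℝ≥0∞)
    (hstar_lc : LeftCont2On star (Set.Iic ybar) (Set.Iic ybar))
    (hstar_le : ∀ a ∈ Set.Iic ybar, ∀ b ∈ Set.Iic ybar, star a b ≤ min a b)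
    {p q M : ℝ≥0∞} (hp : p ≤ ybar) (hq : q ≤ ybar)
    (h : ∀ p' < p, ∀ q' < q, star p' q' ≤ M) : star p q ≤ M := by
  have step1 : ∀ q' < q, star p q' ≤ M := by
    intro q' hq'
    have hq'y : q' ≤ ybar := hq'.le.trans hq
    rcases eq_or_ne p 0 with hp0 | hp0
    · subst hp0
      have := hstar_le 0 (Set.mem_Iic.mpr zero_le) q' hq'y
      simpa using this.trans (by simp)
    · have hne : (𝓝[<] p).NeBot :=
        nhdsWithin_Iio_self_neBot' ⟨0, zero_lt_iff.mpr hp0⟩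
      have ht : Filter.Tendsto (fun x => star x q') (𝓝[Set.Iic p] p) (𝓝 (star p q')) :=
        hstar_lc.1 q' hq'y p hp
      have ht' : Filter.Tendsto (fun x => star x q') (𝓝[<] p) (𝓝 (star p q')) :=
        ht.mono_left (nhdsWithin_mono _ Set.Iio_subset_Iic_self)
      exact le_of_tendsto ht'
        (eventually_nhdsWithin_of_forall fun x hx => h x hx q' hq')
  rcases eq_or_ne q 0 with hq0 | hq0
  · subst hq0
    have := hstar_le p hp 0 (Set.mem_Iic.mpr zero_le)
    simpa using this.trans (by simp)
  · have hne : (𝓝[<] q).NeBot :=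
      nhdsWithin_Iio_self_neBot' ⟨0, zero_lt_iff.mpr hq0⟩
    have ht : Filter.Tendsto (fun y => star p y) (𝓝[Set.Iic q] q) (𝓝 (star p q)) :=
      hstar_lc.2 p hp q hq
    have ht' : Filter.Tendsto (fun y => star p y) (𝓝[<] q) (𝓝 (star p q)) :=
      ht.mono_left (nhdsWithin_mono _ Set.Iio_subset_Iic_self)
    exact le_of_tendsto ht'
      (eventually_nhdsWithin_of_forall fun y hy => step1 y hy)
lemma star_comp_measurable {X : Type*} [MeasurableSpace X] (ybar : ℝ≥0∞)
    (star : ℝ≥0∞ → ℝ≥0∞ → ℝ≥0∞)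
    (hstar_mono : Mono2On star (Set.Iic ybar) (Set.Iic ybar))
    (hstar_lc : LeftCont2On star (Set.Iic ybar) (Set.Iic ybar))
    (hstar_le : ∀ a ∈ Set.Iic ybar, ∀ b ∈ Set.Iic ybar, star a b ≤ min a b)
    (f g : X → ℝ≥0∞) (hf : Measurable f) (hg : Measurable g)
    (hfy : ∀ x, f x ≤ ybar) (hgy : ∀ x, g x ≤ ybar) :
    Measurable fun x => star (f x) (g x) := by
  classical
  have hrep : ∀ x, star (f x) (g x) =
      ⨆ r : ℚ × ℚ, if (Real.toNNReal r.1 : ℝ≥0∞) < f x ∧ (Real.toNNReal r.2 : ℝ≥0∞) < g x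
        then star (Real.toNNReal r.1) (Real.toNNReal r.2) else 0 := by
    intro x
    apply le_antisymm
    · apply lim_lemma ybar star hstar_lc hstar_le (hfy x) (hgy x)
      intro p' hp' q' hq'
      obtain ⟨qr, _, hq1, hq2⟩ := ENNReal.lt_iff_exists_rat_btwn.mp hp'
      obtain ⟨rr, _, hr1, hr2⟩ := ENNReal.lt_iff_exists_rat_btwn.mp hq'
      refine le_trans ?_ (le_iSup _ ((qr, rr) : ℚ × ℚ))
      rw [if_pos ⟨hq2, hr2⟩]
      exact hstar_mono (Set.mem_Iic.mpr (hp'.le.trans (hfy x)))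
        (Set.mem_Iic.mpr (hq'.le.trans (hgy x)))
        (Set.mem_Iic.mpr ((hq2.le).trans (hfy x)))
        (Set.mem_Iic.mpr ((hr2.le).trans (hgy x))) hq1.le hr1.le
    · refine iSup_le fun r => ?_
      split_ifs with hcond
      · exact hstar_mono (Set.mem_Iic.mpr (hcond.1.le.trans (hfy x)))
          (Set.mem_Iic.mpr (hcond.2.le.trans (hgy x)))
          (Set.mem_Iic.mpr (hfy x)) (Set.mem_Iic.mpr (hgy x))
          hcond.1.le hcond.2.le
      · exact zero_le
  have hmeas : Measurable fun x =>
      ⨆ r : ℚ × ℚ, if (Real.toNNReal r.1 : ℝ≥0∞) < f x ∧ (Real.toNNReal r.2 : ℝ≥0∞) < g x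
        then star (Real.toNNReal r.1) (Real.toNNReal r.2) else 0 := by
    refine Measurable.iSup fun r => Measurable.ite ?_ measurable_const measurable_const
    exact (hf measurableSet_Ioi).inter (hg measurableSet_Ioi)
  simpa only [← hrep] using hmeas
lemma le_uSugeno_min {X : Type*} (ybar : ℝ≥0∞) (m : Set X → ℝ≥0∞) (A : Set X)
    (h : X → ℝ≥0∞) {t : ℝ≥0∞} (ht : t ∈ Set.Iic ybar) :
    min t (m (A ∩ {x | t ≤ h x})) ≤ uSugeno ybar (fun a b => min a b) m A h := by
  rw [uSugeno]
  exact le_iSup₂ (f := fun t (_ : t ∈ Set.Iic ybar) => min t (m (A ∩ {x | t ≤ h x}))) t ht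

lemma uSugeno_min_le {X : Type*} (ybar : ℝ≥0∞) (m : Set X → ℝ≥0∞) (hm0 : m ∅ = 0)
    (A : Set X) (h : X → ℝ≥0∞) {c : ℝ≥0∞} (hc : ∀ x, h x ≤ c) :
    uSugeno ybar (fun a b => min a b) m A h ≤ c := by
  rw [uSugeno]
  refine iSup₂_le fun t ht => ?_
  rcases le_or_gt t c with h1 | h1
  · exact le_trans (min_le_left _ _) h1
  · have hempty : A ∩ {x | t ≤ h x} = ∅ := by
      apply Set.eq_empty_iff_forall_notMem.mpr
      intro x hx
      exact absurd (le_trans hx.2 (hc x)) (not_le.mpr h1)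
    rw [hempty, hm0]
    simp

theorem statement13 {X : Type*} [MeasurableSpace X]
    (ybar : ℝ≥0∞) (hybar : 0 < ybar)
    (m : Set X → ℝ≥0∞) (hm : MonotoneMeasure m)
    (star : ℝ≥0∞ → ℝ≥0∞ → ℝ≥0∞)
    (hstar_maps : ∀ a ∈ Set.Iic ybar, ∀ b ∈ Set.Iic ybar, star a b ∈ Set.Iic ybar)
    (hstar_mono : Mono2On star (Set.Iic ybar) (Set.Iic ybar))
    (hstar_lc : LeftCont2On star (Set.Iic ybar) (Set.Iic ybar))
    (hstar_le : ∀ a ∈ Set.Iic ybar, ∀ b ∈ Set.Iic ybar, star a b ≤ min a b)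
    (φ ψ : ℝ≥0∞ → ℝ≥0∞)
    (hφ_maps : Set.MapsTo φ (Set.Iic ybar) (Set.Iic ybar))
    (hφ_cont : ContinuousOn φ (Set.Iic ybar))
    (hφ_mono : StrictMonoOn φ (Set.Iic ybar))
    (hφ_zero : φ 0 = 0)
    (hψ_inv : ∀ x ∈ Set.Iic ybar, ψ (φ x) = x)
    (hψ_inv' : ∀ y ∈ Set.Iic (φ ybar), φ (ψ y) = y)
    (A : Set X) (hA : MeasurableSet A)
    (f g : X → ℝ≥0∞) (hf : Measurable f) (hg : Measurable g)
    (hfy : ∀ x, f x ≤ ybar) (hgy : ∀ x, g x ≤ ybar)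
    (hcom : ComonotoneOn A f g) :
    star (ψ (uSugeno ybar (fun a b => min a b) m A fun x => φ (f x)))
         (ψ (uSugeno ybar (fun a b => min a b) m A fun x => φ (g x)))
      ≤ ψ (uSugeno ybar (fun a b => min a b) m A fun x => φ (star (f x) (g x))) := by
  classical
  obtain ⟨hm0, -, hmono⟩ := hm
  have φm : MonotoneOn φ (Set.Iic ybar) := hφ_mono.monotoneOn
  -- surjectivity of φ onto Iic (φ ybar)
  have hsurj : ∀ y ∈ Set.Iic (φ ybar), ∃ w ∈ Set.Iic ybar, φ w = y := by
    intro y hy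
    have hiic : Set.Icc (0 : ℝ≥0∞) ybar = Set.Iic ybar := by
      ext z; simp
    have hcont : ContinuousOn φ (Set.Icc 0 ybar) := by rwa [hiic]
    have hy' : y ∈ Set.Icc (φ 0) (φ ybar) := by
      rw [hφ_zero]; exact ⟨zero_le, hy⟩
    obtain ⟨w, hw, hwy⟩ := intermediate_value_Icc (zero_le : (0 : ℝ≥0∞) ≤ ybar) hcont hy'
    exact ⟨w, by rw [← hiic]; exact hw, hwy⟩
  have hψ_maps : ∀ y ∈ Set.Iic (φ ybar), ψ y ∈ Set.Iic ybar := by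
    intro y hy
    obtain ⟨w, hw, rfl⟩ := hsurj y hy
    rw [hψ_inv w hw]; exact hw
  have hψ_mono : ∀ y₁ y₂, y₁ ≤ y₂ → y₂ ∈ Set.Iic (φ ybar) → ψ y₁ ≤ ψ y₂ := by
    intro y₁ y₂ h12 hy2
    have hy1 : y₁ ∈ Set.Iic (φ ybar) := le_trans h12 hy2
    refine (hφ_mono.le_iff_le (hψ_maps _ hy1) (hψ_maps _ hy2)).mp ?_
    rw [hψ_inv' _ hy1, hψ_inv' _ hy2]; exact h12
  set sa := uSugeno ybar (fun a b => min a b) m A (fun x => φ (f x)) with hsa_def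
  set sb := uSugeno ybar (fun a b => min a b) m A (fun x => φ (g x)) with hsb_def
  set sc := uSugeno ybar (fun a b => min a b) m A (fun x => φ (star (f x) (g x))) with hsc_def
  have hφfy : ∀ x, φ (f x) ≤ φ ybar := fun x =>
    φm (Set.mem_Iic.mpr (hfy x)) (Set.mem_Iic.mpr le_rfl) (hfy x)
  have hφgy : ∀ x, φ (g x) ≤ φ ybar := fun x =>
    φm (Set.mem_Iic.mpr (hgy x)) (Set.mem_Iic.mpr le_rfl) (hgy x)
  have hsty : ∀ x, star (f x) (g x) ≤ ybar := fun x =>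
    hstar_maps _ (Set.mem_Iic.mpr (hfy x)) _ (Set.mem_Iic.mpr (hgy x))
  have hφsty : ∀ x, φ (star (f x) (g x)) ≤ φ ybar := fun x =>
    φm (Set.mem_Iic.mpr (hsty x)) (Set.mem_Iic.mpr le_rfl) (hsty x)
  have hsa_le : sa ≤ φ ybar := uSugeno_min_le ybar m hm0 A _ hφfy
  have hsb_le : sb ≤ φ ybar := uSugeno_min_le ybar m hm0 A _ hφgy
  have hsc_le : sc ≤ φ ybar := uSugeno_min_le ybar m hm0 A _ hφsty
  set p := ψ sa with hp_def
  set q := ψ sb with hq_def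
  have hpy : p ≤ ybar := hψ_maps sa (Set.mem_Iic.mpr hsa_le)
  have hqy : q ≤ ybar := hψ_maps sb (Set.mem_Iic.mpr hsb_le)
  have hφp : φ p = sa := hψ_inv' sa (Set.mem_Iic.mpr hsa_le)
  have hφq : φ q = sb := hψ_inv' sb (Set.mem_Iic.mpr hsb_le)
  -- for each s < uSugeno, extract a good level set
  have extract : ∀ (h : X → ℝ≥0∞), (∀ x, h x ≤ ybar) → ∀ (s : ℝ≥0∞), s ≤ ybar →
      φ s < uSugeno ybar (fun a b => min a b) m A (fun x => φ (h x)) →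
      ∃ w ∈ Set.Iic ybar, s < w ∧ φ s < m (A ∩ {x | w ≤ h x}) := by
    intro h hhy s hsy hlt
    have hex : ∃ t ∈ Set.Iic ybar, φ s < min t (m (A ∩ {x | t ≤ φ (h x)})) := by
      by_contra hcon
      push_neg at hcon
      have : uSugeno ybar (fun a b => min a b) m A (fun x => φ (h x)) ≤ φ s := by
        rw [uSugeno]; exact iSup₂_le hcon
      exact absurd this (not_le.mpr hlt)
    obtain ⟨t, hty, htmin⟩ := hex
    have htp : φ s < t := htmin.trans_le (min_le_left _ _)
    have htm : φ s < m (A ∩ {x | t ≤ φ (h x)}) := htmin.trans_le (min_le_right _ _)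
    have htφy : t ≤ φ ybar := by
      by_contra hcon
      push_neg at hcon
      have hempty : A ∩ {x | t ≤ φ (h x)} = ∅ := by
        apply Set.eq_empty_iff_forall_notMem.mpr
        intro x hx
        have hb : φ (h x) ≤ φ ybar :=
          φm (Set.mem_Iic.mpr (hhy x)) (Set.mem_Iic.mpr le_rfl) (hhy x)
        exact absurd (le_trans hx.2 hb) (not_le.mpr hcon)
      rw [hempty, hm0] at htm
      exact absurd htm (not_lt.mpr zero_le)
    obtain ⟨w, hwyb, hwt⟩ := hsurj t htφy
    refine ⟨w, hwyb, ?_, ?_⟩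
    · by_contra hcon
      push_neg at hcon
      have : φ w ≤ φ s := φm hwyb (Set.mem_Iic.mpr hsy) hcon
      rw [hwt] at this
      exact absurd htp (not_lt.mpr this)
    · have hEeq : A ∩ {x | t ≤ φ (h x)} = A ∩ {x | w ≤ h x} := by
        ext x
        simp only [Set.mem_inter_iff, Set.mem_setOf_eq, and_congr_right_iff]
        intro _
        rw [← hwt]
        exact hφ_mono.le_iff_le hwyb (Set.mem_Iic.mpr (hhy x))
      rwa [hEeq] at htm
  have hh : Measurable fun x => star (f x) (g x) :=
    star_comp_measurable ybar star hstar_mono hstar_lc hstar_le f g hf hg hfy hgy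
  have key : ∀ p' < p, ∀ q' < q, star p' q' ≤ ψ sc := by
    intro p' hp' q' hq'
    have hp'y : p' ≤ ybar := hp'.le.trans hpy
    have hq'y : q' ≤ ybar := hq'.le.trans hqy
    have hfa : φ p' < sa := by
      rw [← hφp]
      exact hφ_mono (Set.mem_Iic.mpr hp'y) (Set.mem_Iic.mpr hpy) hp'
    have hgb : φ q' < sb := by
      rw [← hφq]
      exact hφ_mono (Set.mem_Iic.mpr hq'y) (Set.mem_Iic.mpr hqy) hq'
    obtain ⟨w, hwyb, hwgt, hwE⟩ := extract f hfy p' hp'y (by rw [← hsa_def]; exact hfa)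
    obtain ⟨v, hvyb, hvgt, hvF⟩ := extract g hgy q' hq'y (by rw [← hsb_def]; exact hgb)
    -- nestedness of the two level sets by comonotonicity
    have hnest : A ∩ {x | w ≤ f x} ⊆ A ∩ {x | v ≤ g x} ∨
        A ∩ {x | v ≤ g x} ⊆ A ∩ {x | w ≤ f x} := by
      by_contra hcon
      push_neg at hcon
      obtain ⟨x, hxE, hxF⟩ := Set.not_subset.mp hcon.1
      obtain ⟨y, hyF, hyE⟩ := Set.not_subset.mp hcon.2
      have hgx : g x < v := by
        by_contra hcc; push_neg at hcc; exact hxF ⟨hxE.1, hcc⟩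
      have hfyy : f y < w := by
        by_contra hcc; push_neg at hcc; exact hyE ⟨hyF.1, hcc⟩
      have hle : g y ≤ g x := hcom y hyF.1 x hxE.1 (lt_of_lt_of_le hfyy hxE.2)
      exact absurd (hyF.2.trans hle) (not_le.mpr hgx)
    set t0 := φ (star p' q') with ht0_def
    have hsy' : star p' q' ≤ ybar :=
      hstar_maps p' (Set.mem_Iic.mpr hp'y) q' (Set.mem_Iic.mpr hq'y)
    have ht0p : t0 ≤ φ p' :=
      φm (Set.mem_Iic.mpr hsy') (Set.mem_Iic.mpr hp'y)
        ((hstar_le p' (Set.mem_Iic.mpr hp'y) q' (Set.mem_Iic.mpr hq'y)).trans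
          (min_le_left _ _))
    have ht0q : t0 ≤ φ q' :=
      φm (Set.mem_Iic.mpr hsy') (Set.mem_Iic.mpr hq'y)
        ((hstar_le p' (Set.mem_Iic.mpr hp'y) q' (Set.mem_Iic.mpr hq'y)).trans
          (min_le_right _ _))
    have hEmeas : MeasurableSet (A ∩ {x | w ≤ f x}) := hA.inter (hf measurableSet_Ici)
    have hFmeas : MeasurableSet (A ∩ {x | v ≤ g x}) := hA.inter (hg measurableSet_Ici)
    have hmEF : t0 ≤ m ((A ∩ {x | w ≤ f x}) ∩ (A ∩ {x | v ≤ g x})) := by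
      rcases hnest with h1 | h1
      · rw [Set.inter_eq_left.mpr h1]
        exact ht0p.trans hwE.le
      · rw [Set.inter_eq_right.mpr h1]
        exact ht0q.trans hvF.le
    have hGmeas : MeasurableSet (A ∩ {x | star p' q' ≤ star (f x) (g x)}) :=
      hA.inter (measurableSet_le measurable_const hh)
    have hsub : (A ∩ {x | w ≤ f x}) ∩ (A ∩ {x | v ≤ g x}) ⊆
        A ∩ {x | star p' q' ≤ star (f x) (g x)} := by
      rintro x ⟨⟨hxA, hxf⟩, ⟨-, hxg⟩⟩
      refine ⟨hxA, ?_⟩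
      exact hstar_mono (Set.mem_Iic.mpr hp'y) (Set.mem_Iic.mpr hq'y)
        (Set.mem_Iic.mpr (hfy x)) (Set.mem_Iic.mpr (hgy x))
        (hwgt.le.trans hxf) (hvgt.le.trans hxg)
    have hmG : t0 ≤ m (A ∩ {x | t0 ≤ φ (star (f x) (g x))}) := by
      have hset : A ∩ {x | t0 ≤ φ (star (f x) (g x))} =
          A ∩ {x | star p' q' ≤ star (f x) (g x)} := by
        ext x
        simp only [Set.mem_inter_iff, Set.mem_setOf_eq, and_congr_right_iff]
        intro _
        rw [ht0_def]
        exact hφ_mono.le_iff_le (Set.mem_Iic.mpr hsy') (Set.mem_Iic.mpr (hsty x))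
      rw [hset]
      exact hmEF.trans (hmono (hEmeas.inter hFmeas) hGmeas hsub)
    have hct0 : t0 ≤ sc := by
      have ht0yb : t0 ∈ Set.Iic ybar := hφ_maps (Set.mem_Iic.mpr hsy')
      calc t0 = min t0 t0 := (min_self _).symm
        _ ≤ min t0 (m (A ∩ {x | t0 ≤ φ (star (f x) (g x))})) := min_le_min le_rfl hmG
        _ ≤ sc := by
            rw [hsc_def]
            exact le_uSugeno_min ybar m A _ ht0yb
    calc star p' q' = ψ t0 := (hψ_inv _ (Set.mem_Iic.mpr hsy')).symm
      _ ≤ ψ sc := hψ_mono t0 sc hct0 (Set.mem_Iic.mpr hsc_le)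
  exact lim_lemma ybar star hstar_lc hstar_le hpy hqy key
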